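/- Let G be a finite graph on n vertices and let C be the structure on domain V(G) ∪ {⋆, c⊥} with binary cost f(x,y) = −∞ if x,y ∈ V(G) and xy ∉ E(G) or x = y = ⋆; f(⋆, y) = 1 for y ∈ V(G); and f = 0 otherwise. Then the maximum, over all maps h : [n+1] → V(G) ∪ {⋆, c⊥} that assign finite total value to the complete graph instance K_{n+1} (with all ordered pairs of distinct vertices as unit-weight constraints), of the total value equals the maximum clique size of G. -/
import Mathlib


/-- The domain `V(G) ∪ {⋆, c⊥}`: `Sum.inl v` is a vertex, `Sum.inr true = ⋆`,
`Sum.inr false = c⊥`. -/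
abbrev MCDom (n : ℕ) := Sum (Fin n) Bool

/-- The Max-Sol cost function encoding Maximum Clique. -/
noncomputable def mcCost (n : ℕ) (G : SimpleGraph (Fin n)) [DecidableRel G.Adj] :
    MCDom n → MCDom n → EReal
  | Sum.inl a, Sum.inl b => if ¬ G.Adj a b then ⊥ else 0
  | Sum.inr true, Sum.inr true => ⊥
  | Sum.inr true, Sum.inl _ => 1
  | _, _ => 0

/-- The value of an assignment `h` on the complete instance `K_{n+1}`:
the sum over all ordered pairs of distinct vertices. -/
noncomputable def mcVal (n : ℕ) (G : SimpleGraph (Fin n)) [DecidableRel G.Adj]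
    (h : Fin (n + 1) → MCDom n) : EReal :=
  ∑ u : Fin (n + 1), ∑ v : Fin (n + 1),
    if u ≠ v then mcCost n G (h u) (h v) else 0

/-- Star indicator. -/
def mcA {n : ℕ} : MCDom n → ℕ
  | Sum.inr true => 1
  | _ => 0

/-- Vertex indicator. -/
def mcB {n : ℕ} : MCDom n → ℕ
  | Sum.inl _ => 1
  | _ => 0

lemma mcCost_eq_of_ne_bot {n : ℕ} {G : SimpleGraph (Fin n)} [DecidableRel G.Adj]
    {x y : MCDom n} (h : mcCost n G x y ≠ ⊥) :
    mcCost n G x y = ((mcA x * mcB y : ℕ) : EReal) := by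
  rcases x with a | (_|_) <;> rcases y with b | (_|_) <;>
    simp_all [mcCost, mcA, mcB]

lemma mcA_mul_mcB_self {n : ℕ} (x : MCDom n) : mcA x * mcB x = 0 := by
  rcases x with a | (_|_) <;> simp [mcA, mcB]

lemma ereal_one_ne_bot : (1 : EReal) ≠ ⊥ := by
  exact_mod_cast EReal.natCast_ne_bot 1

lemma ereal_zero_ne_bot : (0 : EReal) ≠ ⊥ := by
  exact_mod_cast EReal.natCast_ne_bot 0

lemma sum_eq_bot {α : Type*} (s : Finset α) (f : α → EReal) {i : α} (hi : i ∈ s)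
    (h : f i = ⊥) : ∑ x ∈ s, f x = ⊥ := by
  classical
  rw [← Finset.add_sum_erase s f hi, h, EReal.bot_add]

/-- If no constraint is violated, the value is `#stars * #vertices`. -/
lemma mcVal_eq {n : ℕ} {G : SimpleGraph (Fin n)} [DecidableRel G.Adj]
    {h : Fin (n + 1) → MCDom n}
    (hfe : ∀ u v : Fin (n + 1), u ≠ v → mcCost n G (h u) (h v) ≠ ⊥) :
    mcVal n G h =
      (((∑ u : Fin (n + 1), mcA (h u)) * (∑ v : Fin (n + 1), mcB (h v)) : ℕ) : EReal) := by
  have key : ∀ u v : Fin (n + 1),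
      (if u ≠ v then mcCost n G (h u) (h v) else 0) = ((mcA (h u) * mcB (h v) : ℕ) : EReal) := by
    intro u v
    by_cases huv : u = v
    · subst huv
      simp [mcA_mul_mcB_self]
    · rw [if_pos huv, mcCost_eq_of_ne_bot (hfe u v huv)]
  calc mcVal n G h = ∑ u : Fin (n + 1), ∑ v : Fin (n + 1),
        ((mcA (h u) * mcB (h v) : ℕ) : EReal) := by
          unfold mcVal; exact Finset.sum_congr rfl fun u _ =>
            Finset.sum_congr rfl fun v _ => key u v
    _ = (((∑ u : Fin (n + 1), ∑ v : Fin (n + 1), mcA (h u) * mcB (h v) : ℕ)) : EReal) := by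
          rw [Nat.cast_sum]; exact Finset.sum_congr rfl fun u _ => (Nat.cast_sum _ _).symm
    _ = _ := by rw [Finset.sum_mul_sum]

lemma sum_mcA_le_one {n : ℕ} {G : SimpleGraph (Fin n)} [DecidableRel G.Adj]
    {h : Fin (n + 1) → MCDom n}
    (hfe : ∀ u v : Fin (n + 1), u ≠ v → mcCost n G (h u) (h v) ≠ ⊥) :
    ∑ u : Fin (n + 1), mcA (h u) ≤ 1 := by
  classical
  have : ∑ u : Fin (n + 1), mcA (h u)
      = (Finset.univ.filter (fun u => h u = Sum.inr true)).card := by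
    rw [Finset.card_filter]
    refine Finset.sum_congr rfl fun u _ => ?_
    rcases hu : h u with a | (_|_) <;> simp [mcA]
  rw [this]
  rw [Finset.card_le_one]
  intro u hu v hv
  simp only [Finset.mem_filter] at hu hv
  by_contra huv
  exact hfe u v huv (by rw [hu.2, hv.2]; rfl)

lemma sum_mcB_le_cliqueNum {n : ℕ} {G : SimpleGraph (Fin n)} [DecidableRel G.Adj]
    {h : Fin (n + 1) → MCDom n}
    (hfe : ∀ u v : Fin (n + 1), u ≠ v → mcCost n G (h u) (h v) ≠ ⊥) :
    ∑ u : Fin (n + 1), mcB (h u) ≤ G.cliqueNum := by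
  classical
  set S : Finset (Fin (n + 1)) := Finset.univ.filter (fun u => ∃ a, h u = Sum.inl a) with hS
  have hsum : ∑ u : Fin (n + 1), mcB (h u) = S.card := by
    rw [hS, Finset.card_filter]
    refine Finset.sum_congr rfl fun u _ => ?_
    rcases hu : h u with a | (_|_) <;> simp [mcB]
  set K : Finset (Fin n) := Finset.univ.filter (fun a => ∃ u, h u = Sum.inl a) with hK
  -- distinct vertices of K are adjacent
  have hadj : ∀ a ∈ K, ∀ b ∈ K, a ≠ b → G.Adj a b := by
    intro a ha b hb hab
    simp only [hK, Finset.mem_filter, Finset.mem_univ, true_and] at ha hb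
    obtain ⟨u, hu⟩ := ha
    obtain ⟨v, hv⟩ := hb
    have huv : u ≠ v := by
      rintro rfl
      exact hab (Sum.inl.inj (hu.symm.trans hv))
    by_contra hnadj
    exact hfe u v huv (by rw [hu, hv]; simp [mcCost, hnadj])
  have hclique : G.IsClique (K : Set (Fin n)) := by
    intro a ha b hb hab
    exact hadj a (by exact_mod_cast ha) b (by exact_mod_cast hb) hab
  have hKcard : K.card ≤ G.cliqueNum :=
    SimpleGraph.IsClique.card_le_cliqueNum (tc := hclique)
  -- S.card ≤ K.card via a surjection K → S
  have hSK : S.card ≤ K.card := by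
    have : ∀ a : Fin n, ∃ u : Fin (n + 1), (∃ w, h w = Sum.inl a) → h u = Sum.inl a := by
      intro a
      by_cases hex : ∃ w, h w = Sum.inl a
      · obtain ⟨w, hw⟩ := hex; exact ⟨w, fun _ => hw⟩
      · exact ⟨0, fun hc => absurd hc hex⟩
    choose f hf using this
    apply Finset.card_le_card_of_surjOn f
    intro u hu
    simp only [hS, Finset.coe_filter, Set.mem_setOf_eq, Finset.mem_univ, true_and] at hu
    obtain ⟨a, ha⟩ := hu
    refine ⟨a, ?_, ?_⟩
    · simp only [hK, Finset.coe_filter, Set.mem_setOf_eq, Finset.mem_univ, true_and]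
      exact ⟨u, ha⟩
    · -- f a = u by injectivity on vertices
      have hfa : h (f a) = Sum.inl a := hf a ⟨u, ha⟩
      by_contra hne
      have := hfe (f a) u hne
      rw [hfa, ha] at this
      exact this (by simp [mcCost])
  omega

/-- The maximum value of the clique-encoding VCSP instance on `K_{n+1}`
equals the maximum clique size of `G`. -/
theorem stmt_10 (n : ℕ) (G : SimpleGraph (Fin n)) [DecidableRel G.Adj] :
    (∀ h : Fin (n + 1) → MCDom n, mcVal n G h ≤ (G.cliqueNum : EReal)) ∧
    (∃ h : Fin (n + 1) → MCDom n, mcVal n G h ≠ ⊥ ∧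
      mcVal n G h = (G.cliqueNum : EReal)) := by
  classical
  constructor
  · -- upper bound
    intro h
    by_cases hfe : ∀ u v : Fin (n + 1), u ≠ v → mcCost n G (h u) (h v) ≠ ⊥
    · rw [mcVal_eq hfe]
      have h1 := sum_mcA_le_one hfe
      have h2 := sum_mcB_le_cliqueNum hfe
      have : (∑ u : Fin (n + 1), mcA (h u)) * (∑ v : Fin (n + 1), mcB (h v))
          ≤ G.cliqueNum := le_trans (Nat.mul_le_mul h1 h2) (by omega)
      exact_mod_cast this
    · push_neg at hfe
      obtain ⟨u, v, huv, hbot⟩ := hfe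
      have : mcVal n G h = ⊥ := by
        unfold mcVal
        apply sum_eq_bot _ _ (Finset.mem_univ u)
        apply sum_eq_bot _ _ (Finset.mem_univ v)
        rw [if_pos huv]
        exact not_not.mp (by simpa using hbot)
      rw [this]; exact bot_le
  · -- existence
    obtain ⟨t, ht⟩ := G.exists_isNClique_cliqueNum
    have htcard : t.card = G.cliqueNum := ht.card_eq
    have htn : t.card ≤ n := by
      simpa using Finset.card_le_card (Finset.subset_univ t)
    set e : Fin t.card → Fin n := fun i => (t.orderIsoOfFin rfl i : Fin n) with he
    have hemem : ∀ i, e i ∈ t := fun i => (t.orderIsoOfFin rfl i).2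
    have heinj : Function.Injective e := fun i j hij => by
      have := Subtype.ext hij
      exact (t.orderIsoOfFin rfl).injective this
    set h : Fin (n + 1) → MCDom n :=
      Fin.cases (Sum.inr true)
        (fun i : Fin n => if hi : (i : ℕ) < t.card then Sum.inl (e ⟨i, hi⟩) else Sum.inr false)
      with hh
    have h0 : h 0 = Sum.inr true := rfl
    have hsucc : ∀ i : Fin n, h i.succ =
        if hi : (i : ℕ) < t.card then Sum.inl (e ⟨i, hi⟩) else Sum.inr false :=
      fun i => by rw [hh]; exact Fin.cases_succ _
    -- feasibility
    have hfe : ∀ u v : Fin (n + 1), u ≠ v → mcCost n G (h u) (h v) ≠ ⊥ := by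
      intro u v huv
      rcases Fin.eq_zero_or_eq_succ u with rfl | ⟨i, rfl⟩ <;>
        rcases Fin.eq_zero_or_eq_succ v with rfl | ⟨j, rfl⟩
      · exact absurd rfl huv
      · rw [h0, hsucc j]
        by_cases hj : (j : ℕ) < t.card
        · rw [dif_pos hj]; exact ereal_one_ne_bot
        · rw [dif_neg hj]; exact ereal_zero_ne_bot
      · rw [h0, hsucc i]
        by_cases hi : (i : ℕ) < t.card
        · rw [dif_pos hi]; exact ereal_zero_ne_bot
        · rw [dif_neg hi]; exact ereal_zero_ne_bot
      · have hij : i ≠ j := fun e => huv (by rw [e])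
        rw [hsucc i, hsucc j]
        by_cases hi : (i : ℕ) < t.card <;> by_cases hj : (j : ℕ) < t.card
        · rw [dif_pos hi, dif_pos hj]
          have hne : e ⟨i, hi⟩ ≠ e ⟨j, hj⟩ := by
            intro hc
            exact hij (Fin.ext (by simpa using congrArg Fin.val (heinj hc)))
          have hadj : G.Adj (e ⟨i, hi⟩) (e ⟨j, hj⟩) :=
            ht.isClique (hemem _) (hemem _) hne
          simp [mcCost, hadj, ereal_zero_ne_bot]
        · rw [dif_pos hi, dif_neg hj]; exact ereal_zero_ne_bot
        · rw [dif_neg hi, dif_pos hj]; exact ereal_zero_ne_bot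
        · rw [dif_neg hi, dif_neg hj]; exact ereal_zero_ne_bot
    refine ⟨h, ?_, ?_⟩
    case _ =>
      rw [mcVal_eq hfe]
      exact EReal.natCast_ne_bot _
    case _ =>
      rw [mcVal_eq hfe]
      have hA : ∑ u : Fin (n + 1), mcA (h u) = 1 := by
        rw [Fin.sum_univ_succ, h0]
        have : ∀ i : Fin n, mcA (h i.succ) = 0 := by
          intro i
          rw [hsucc i]
          by_cases hi : (i : ℕ) < t.card
          · rw [dif_pos hi]; rfl
          · rw [dif_neg hi]; rfl
        simp only [this, Finset.sum_const_zero]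
        rfl
      have hB : ∑ u : Fin (n + 1), mcB (h u) = t.card := by
        rw [Fin.sum_univ_succ, h0]
        have h1 : ∀ i : Fin n, mcB (h i.succ) = if (i : ℕ) < t.card then 1 else 0 := by
          intro i
          rw [hsucc i]
          by_cases hi : (i : ℕ) < t.card
          · rw [dif_pos hi, if_pos hi]; rfl
          · rw [dif_neg hi, if_neg hi]; rfl
        have h2 : ∑ i : Fin n, mcB (h i.succ) = t.card := by
          rw [Finset.sum_congr rfl (fun i _ => h1 i), ← Finset.card_filter]
          rw [← Finset.card_range t.card]
          apply Finset.card_nbij (i := Fin.val)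
          · intro a ha; simp at ha ⊢; omega
          · intro a _ b _ hab; exact Fin.ext hab
          · intro m hm; simp at hm ⊢; exact ⟨⟨m, by omega⟩, by simp; omega⟩
        rw [h2]
        simp [mcB]
      rw [hA, hB, one_mul, htcard]
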